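/- Let q ∈ [1,2) and let β : ℕ → ℝ be a sequence with β(n) ≤ c·n^{-1/q} for all n ≥ N (for some constants c > 0, N ∈ ℕ). Let τ : ℕ → ℕ be a sequence satisfying τ(n) ≤ ε·n^{1/q} for all n ≥ N(ε), for every ε ∈ (0,1). Then lim_{n→∞} ∑_{m=n-τ(n)}^{n-1} β(m) = 0. -/

import Mathlib

open Filter

/-- Vanishing AoI window sums: if the step sizes satisfy `β(n) ≤ c n^{-1/q}` eventually and the
ages satisfy `τ(n) ≤ ε n^{1/q}` eventually for every `ε ∈ (0,1)`, then
`∑_{m=n-τ(n)}^{n-1} β(m) → 0`. -/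
theorem stmt_3 (q : ℝ) (hq1 : 1 ≤ q) (hq2 : q < 2)
    (β : ℕ → ℝ) (hβnonneg : ∀ n, 0 ≤ β n)
    (c : ℝ) (hc : 0 < c) (N : ℕ)
    (hβ : ∀ n ≥ N, β n ≤ c * (n : ℝ) ^ (-(1 / q)))
    (τ : ℕ → ℕ)
    (hτ : ∀ ε : ℝ, 0 < ε → ε < 1 → ∃ Nε : ℕ, ∀ n ≥ Nε, (τ n : ℝ) ≤ ε * (n : ℝ) ^ (1 / q)) :
    Tendsto (fun n => ∑ m ∈ Finset.Ico (n - τ n) n, β m) atTop (nhds 0) := by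
  have hq0 : 0 < q := lt_of_lt_of_le one_pos hq1
  have hiq0 : 0 < 1 / q := by positivity
  have hiq1 : 1 / q ≤ 1 := by rw [div_le_one hq0]; exact hq1
  rw [Metric.tendsto_atTop]
  intro δ hδ
  have hεpos : 0 < min (δ / (4 * c)) (1 / 2) := lt_min (by positivity) (by norm_num)
  obtain ⟨Nε, hNε⟩ := hτ _ hεpos (lt_of_le_of_lt (min_le_right _ _) (by norm_num))
  set ε := min (δ / (4 * c)) (1 / 2) with hεdef
  refine ⟨max (max Nε (2 * N + 2)) 1, fun n hn => ?_⟩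
  have hn1 : 1 ≤ n := le_trans (le_max_right _ _) hn
  have hnN : 2 * N + 2 ≤ n := le_trans (le_trans (le_max_right _ _) (le_max_left _ _)) hn
  have hnε : Nε ≤ n := le_trans (le_trans (le_max_left _ _) (le_max_left _ _)) hn
  have hn0 : (0 : ℝ) < n := by exact_mod_cast hn1
  have hτn : (τ n : ℝ) ≤ ε * (n : ℝ) ^ (1 / q) := hNε n hnε
  have hpow_le : (n : ℝ) ^ (1 / q) ≤ n := by
    calc (n : ℝ) ^ (1 / q) ≤ (n : ℝ) ^ (1 : ℝ) :=
          Real.rpow_le_rpow_of_exponent_le (by exact_mod_cast hn1) hiq1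
    _ = n := Real.rpow_one _
  have hτhalf : (τ n : ℝ) ≤ n / 2 := by
    calc (τ n : ℝ) ≤ ε * (n : ℝ) ^ (1 / q) := hτn
    _ ≤ (1 / 2) * n :=
        mul_le_mul (min_le_right _ _) hpow_le (by positivity) (by norm_num)
    _ = n / 2 := by ring
  have hτle : τ n ≤ n := by
    have : (τ n : ℝ) ≤ n := le_trans hτhalf (by linarith)
    exact_mod_cast this
  have hmem : ∀ m ∈ Finset.Ico (n - τ n) n, β m ≤ c * ((n : ℝ) / 2) ^ (-(1 / q)) := by
    intro m hm
    obtain ⟨hm1, hm2⟩ := Finset.mem_Ico.mp hm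
    have hmR : (n : ℝ) / 2 ≤ m := by
      have h : ((n - τ n : ℕ) : ℝ) ≤ m := by exact_mod_cast hm1
      rw [Nat.cast_sub hτle] at h
      linarith
    have hmN : N ≤ m := by
      have h2 : ((2 * N + 2 : ℕ) : ℝ) ≤ n := by exact_mod_cast hnN
      have : (N : ℝ) ≤ m := by push_cast at h2 ⊢; linarith
      exact_mod_cast this
    calc β m ≤ c * (m : ℝ) ^ (-(1 / q)) := hβ m hmN
    _ ≤ c * ((n : ℝ) / 2) ^ (-(1 / q)) := by
        apply mul_le_mul_of_nonneg_left _ hc.le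
        exact Real.rpow_le_rpow_of_nonpos (by positivity) hmR (by linarith)
  have hsum : ∑ m ∈ Finset.Ico (n - τ n) n, β m
      ≤ (τ n : ℝ) * (c * ((n : ℝ) / 2) ^ (-(1 / q))) := by
    calc ∑ m ∈ Finset.Ico (n - τ n) n, β m
        ≤ (Finset.Ico (n - τ n) n).card • (c * ((n : ℝ) / 2) ^ (-(1 / q))) :=
          Finset.sum_le_card_nsmul _ _ _ hmem
    _ = ((n - (n - τ n) : ℕ) : ℝ) * (c * ((n : ℝ) / 2) ^ (-(1 / q))) := by
          rw [Nat.card_Ico, nsmul_eq_mul]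
    _ = (τ n : ℝ) * (c * ((n : ℝ) / 2) ^ (-(1 / q))) := by
          rw [Nat.sub_sub_self hτle]
  have h1 : ((n : ℝ) / 2) ^ (-(1 / q)) = (n : ℝ) ^ (-(1 / q)) * 2 ^ (1 / q) := by
    rw [Real.div_rpow hn0.le (by norm_num : (0:ℝ) ≤ 2),
      Real.rpow_neg (by norm_num : (0:ℝ) ≤ 2), Real.rpow_neg hn0.le]
    rw [div_eq_mul_inv, inv_inv]
  have h2q : (2 : ℝ) ^ (1 / q) ≤ 2 := by
    calc (2 : ℝ) ^ (1 / q) ≤ (2 : ℝ) ^ (1 : ℝ) :=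
          Real.rpow_le_rpow_of_exponent_le (by norm_num) hiq1
    _ = 2 := Real.rpow_one 2
  have hnn : (n : ℝ) ^ (1 / q) * (n : ℝ) ^ (-(1 / q)) = 1 := by
    rw [← Real.rpow_add hn0]; simp
  have hbound : (τ n : ℝ) * (c * ((n : ℝ) / 2) ^ (-(1 / q))) ≤ 2 * c * ε := by
    calc (τ n : ℝ) * (c * ((n : ℝ) / 2) ^ (-(1 / q)))
        ≤ (ε * (n : ℝ) ^ (1 / q)) * (c * ((n : ℝ) / 2) ^ (-(1 / q))) := by
          apply mul_le_mul_of_nonneg_right hτn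
          positivity
    _ = ε * c * ((n : ℝ) ^ (1 / q) * (n : ℝ) ^ (-(1 / q))) * 2 ^ (1 / q) := by
          rw [h1]; ring
    _ = ε * c * 2 ^ (1 / q) := by rw [hnn]; ring
    _ ≤ ε * c * 2 := mul_le_mul_of_nonneg_left h2q (by positivity)
    _ = 2 * c * ε := by ring
  have hεle : ε ≤ δ / (4 * c) := min_le_left _ _
  have hfinal : 2 * c * ε < δ := by
    have h2 : 2 * c * (δ / (4 * c)) = δ / 2 := by field_simp; ring
    nlinarith
  rw [Real.dist_eq, sub_zero, abs_of_nonneg (Finset.sum_nonneg fun m _ => hβnonneg m)]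
  linarith
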